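/- Let F be a finite field of characteristic 2 and let f = a00·X0^2 + a01·X0·X1 + a02·X0·X2 + a11·X1^2 + a12·X1·X2 + a22·X2^2 be a quadratic form over F. Then f is absolutely irreducible (i.e., the image of f in K[X0,X1,X2], where K is an algebraic closure of F, is irreducible) if and only if a00·a12^2 + a11·a02^2 + a22·a01^2 + a01·a02·a12 ≠ 0. -/

import Mathlib

set_option maxHeartbeats 1000000


noncomputable section

open MvPolynomial

namespace Pencils

/-- The space of ternary polynomials over `F`. -/
abbrev Poly (F : Type*) [Field F] : Type _ := MvPolynomial (Fin 3) F

variable {F : Type*} [Field F]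

/-- The coefficient of the monomial `X i * X j` in `f` (for `i = j`, of `X i ^ 2`). -/
def qc (f : Poly F) (i j : Fin 3) : F :=
  MvPolynomial.coeff (Finsupp.single i 1 + Finsupp.single j 1) f

/-- A quadratic form over a field of characteristic 2 is singular iff
`a00·a12² + a11·a02² + a22·a01² + a01·a02·a12 = 0`. -/
def IsSingular (f : Poly F) : Prop :=
  qc f 0 0 * qc f 1 2 ^ 2 + qc f 1 1 * qc f 0 2 ^ 2 + qc f 2 2 * qc f 0 1 ^ 2 +
    qc f 0 1 * qc f 0 2 * qc f 1 2 = 0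

/-- A pencil of conics: a 2-dimensional subspace of the space of
homogeneous quadratic forms in `X 0, X 1, X 2`. -/
def IsPencil (W : Submodule F (Poly F)) : Prop :=
  W ≤ homogeneousSubmodule (Fin 3) F 2 ∧ Module.finrank F ↥W = 2

/-- A member of a pencil `W` is a 1-dimensional subspace of `W`. -/
def IsMember (W L : Submodule F (Poly F)) : Prop :=
  L ≤ W ∧ Module.finrank F ↥L = 1

/-- A double line: all nonzero elements are squares of nonzero linear forms. -/
def IsDoubleLine (L : Submodule F (Poly F)) : Prop :=
  ∀ f ∈ L, f ≠ 0 → ∃ ℓ : Poly F, ℓ.IsHomogeneous 1 ∧ ℓ ≠ 0 ∧ f = ℓ ^ 2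

/-- A real line pair: all nonzero elements are products of two linearly
independent linear forms over `F`. -/
def IsRealPair (L : Submodule F (Poly F)) : Prop :=
  ∀ f ∈ L, f ≠ 0 → ∃ ℓ m : Poly F, ℓ.IsHomogeneous 1 ∧ m.IsHomogeneous 1 ∧
    LinearIndependent F ![ℓ, m] ∧ f = ℓ * m

/-- `f` has a nonzero linear form over `F` as a factor. -/
def HasLinearFactor (f : Poly F) : Prop :=
  ∃ ℓ : Poly F, ℓ.IsHomogeneous 1 ∧ ℓ ≠ 0 ∧ ℓ ∣ f

/-- An imaginary line pair: all nonzero elements are singular with no linear factor over `F`. -/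
def IsImagPair (L : Submodule F (Poly F)) : Prop :=
  ∀ f ∈ L, f ≠ 0 → IsSingular f ∧ ¬ HasLinearFactor f

/-- A nonsingular member: all nonzero elements are nonsingular. -/
def IsNonsingularConic (L : Submodule F (Poly F)) : Prop :=
  ∀ f ∈ L, f ≠ 0 → ¬ IsSingular f

/-- `a1 W`: number of members of `W` that are double lines. -/
def a1 (W : Submodule F (Poly F)) : ℕ :=
  Nat.card {L : Submodule F (Poly F) // IsMember W L ∧ IsDoubleLine L}

/-- `a2r W`: number of members of `W` that are real line pairs. -/
def a2r (W : Submodule F (Poly F)) : ℕ :=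
  Nat.card {L : Submodule F (Poly F) // IsMember W L ∧ IsRealPair L}

/-- `a2i W`: number of members of `W` that are imaginary line pairs. -/
def a2i (W : Submodule F (Poly F)) : ℕ :=
  Nat.card {L : Submodule F (Poly F) // IsMember W L ∧ IsImagPair L}

/-- `a3 W`: number of members of `W` that are nonsingular conics. -/
def a3 (W : Submodule F (Poly F)) : ℕ :=
  Nat.card {L : Submodule F (Poly F) // IsMember W L ∧ IsNonsingularConic L}

/-- A base point of the pencil `W`: a 1-dimensional subspace of `F³` on which
every element of `W` vanishes. -/
def IsBasePoint (W : Submodule F (Poly F)) (P : Submodule F (Fin 3 → F)) : Prop :=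
  Module.finrank F ↥P = 1 ∧ ∀ f ∈ W, ∀ v ∈ P, MvPolynomial.eval v f = 0

/-- `b W`: the number of base points of `W`. -/
def b (W : Submodule F (Poly F)) : ℕ :=
  Nat.card {P : Submodule F (Fin 3 → F) // IsBasePoint W P}

/-- The substitution action of a matrix `g` on quadratic forms: `(g • f)(X) = f(g·X)`. -/
def act (g : Matrix (Fin 3) (Fin 3) F) : Poly F →ₗ[F] Poly F :=
  (MvPolynomial.aeval (fun i => ∑ j : Fin 3, MvPolynomial.C (g i j) * MvPolynomial.X j) :
    Poly F →ₐ[F] Poly F).toLinearMap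


section AuxLemmas

variable {K : Type*} [Field K]
lemma supp_sum (d : Fin 3 →₀ ℕ) : (∑ i ∈ d.support, d i) = d 0 + d 1 + d 2 := by
  rw [← Fin.sum_univ_three d]
  exact (Finset.sum_subset (Finset.subset_univ _)
    (fun x _ hx => by simpa [Finsupp.mem_support_iff] using hx))

lemma mono_class (m : Fin 3 →₀ ℕ) (h : m 0 + m 1 + m 2 ≤ 1) :
    m = 0 ∨ m = Finsupp.single 0 1 ∨ m = Finsupp.single 1 1 ∨ m = Finsupp.single 2 1 := by
  have h0 : m 0 = 0 ∨ m 0 = 1 := by omega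
  have h1 : m 1 = 0 ∨ m 1 = 1 := by omega
  have h2 : m 2 = 0 ∨ m 2 = 1 := by omega
  rcases h0 with h0 | h0 <;> rcases h1 with h1 | h1 <;> rcases h2 with h2 | h2 <;>
    [skip; skip; skip; omega; skip; omega; omega; omega]
  · left; ext x; fin_cases x <;> simp [h0, h1, h2]
  · right; right; right; ext x; fin_cases x <;> simp [h0, h1, h2, Finsupp.single_apply]
  · right; right; left; ext x; fin_cases x <;> simp [h0, h1, h2, Finsupp.single_apply]
  · right; left; ext x; fin_cases x <;> simp [h0, h1, h2, Finsupp.single_apply]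

lemma structural {p : MvPolynomial (Fin 3) K} (hp : p.totalDegree ≤ 1) :
    p = C (coeff 0 p) + C (coeff (Finsupp.single 0 1) p) * X 0 +
      C (coeff (Finsupp.single 1 1) p) * X 1 + C (coeff (Finsupp.single 2 1) p) * X 2 := by
  ext d
  by_cases hd : d 0 + d 1 + d 2 ≤ 1
  · rcases mono_class d hd with rfl | rfl | rfl | rfl <;>
      simp [X, monomial_mul, C_mul_monomial, coeff_monomial, coeff_add, coeff_C,
        Finsupp.ext_iff, Fin.forall_fin_succ, Finsupp.single_apply]
  · push_neg at hd
    have hz : coeff d p = 0 := by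
      apply coeff_eq_zero_of_totalDegree_lt
      rw [supp_sum]; omega
    rw [hz]
    have hne0 : d ≠ 0 := by rintro rfl; simp at hd
    have hne : ∀ i : Fin 3, (Finsupp.single i 1 : Fin 3 →₀ ℕ) ≠ d := by
      rintro i rfl
      fin_cases i <;> simp [Finsupp.single_apply] at hd
    simp [coeff_add, coeff_C, coeff_C_mul, coeff_X', Ne.symm hne0, if_neg (hne 0),
      if_neg (hne 1), if_neg (hne 2)]

section Deg

variable {σ : Type*}

lemma hc_top_ne_zero {p : MvPolynomial σ K} (hp : p ≠ 0) :
    homogeneousComponent p.totalDegree p ≠ 0 := by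
  classical
  obtain ⟨m, hm, hdeg⟩ := p.support.exists_mem_eq_sup (MvPolynomial.support_nonempty.mpr hp)
      (fun m => m.sum fun _ e => e)
  have hc : coeff m (homogeneousComponent p.totalDegree p) = coeff m p := by
    rw [coeff_homogeneousComponent, if_pos]
    rw [totalDegree, hdeg]
    rfl
  intro h0
  rw [h0, coeff_zero] at hc
  exact (mem_support_iff.mp hm) hc.symm

lemma add_totalDegree_le_mul {p q : MvPolynomial σ K} (hp : p ≠ 0) (hq : q ≠ 0) :
    p.totalDegree + q.totalDegree ≤ (p * q).totalDegree := by
  classical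
  by_contra hlt
  push_neg at hlt
  set a := p.totalDegree with ha
  set b := q.totalDegree with hb
  have hcomp : homogeneousComponent (a + b) (p * q) = 0 :=
    homogeneousComponent_eq_zero _ _ hlt
  have key : homogeneousComponent (a + b) (p * q) =
      homogeneousComponent a p * homogeneousComponent b q := by
    have hP := sum_homogeneousComponent p
    have hQ := sum_homogeneousComponent q
    rw [← ha] at hP
    rw [← hb] at hQ
    nth_rewrite 1 [← hP]
    nth_rewrite 1 [← hQ]
    rw [Finset.sum_mul_sum, map_sum]
    rw [Finset.sum_eq_single a]
    · rw [map_sum, Finset.sum_eq_single b]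
      · rw [homogeneousComponent_of_mem
          ((homogeneousComponent_isHomogeneous a p).mul
            (homogeneousComponent_isHomogeneous b q))]
        simp
      · intro j hj hjne
        rw [homogeneousComponent_of_mem
          ((homogeneousComponent_isHomogeneous a p).mul
            (homogeneousComponent_isHomogeneous j q))]
        rw [if_neg (by omega)]
      · intro h; exact absurd (Finset.self_mem_range_succ _) h
    · intro i hi hine
      rw [Finset.mem_range] at hi
      rw [map_sum]
      apply Finset.sum_eq_zero
      intro j hj
      rw [Finset.mem_range] at hj
      rw [homogeneousComponent_of_mem
        ((homogeneousComponent_isHomogeneous i p).mul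
          (homogeneousComponent_isHomogeneous j q))]
      rw [if_neg (by omega)]
    · intro h; exact absurd (Finset.self_mem_range_succ _) h
  rw [key] at hcomp
  rcases mul_eq_zero.mp hcomp with h | h
  · exact hc_top_ne_zero hp h
  · exact hc_top_ne_zero hq h

lemma totalDegree_eq_zero_of_isUnit {p : MvPolynomial σ K} (h : IsUnit p) :
    p.totalDegree = 0 := by
  obtain ⟨u, rfl⟩ := h
  have h1 : ((u : MvPolynomial σ K) * ((u⁻¹ : (MvPolynomial σ K)ˣ) : MvPolynomial σ K)) = 1 :=
    u.mul_inv
  have h2 := add_totalDegree_le_mul u.ne_zero u⁻¹.ne_zero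
  rw [h1, totalDegree_one] at h2
  omega

lemma eq_C_of_totalDegree_eq_zero {p : MvPolynomial σ K} (h : p.totalDegree = 0) :
    p = C (coeff 0 p) := by
  classical
  ext d
  rcases eq_or_ne d 0 with rfl | hd
  · simp
  · rw [coeff_C, if_neg (Ne.symm hd)]
    by_contra hc
    have hds : d ∈ p.support := by simpa [mem_support_iff] using hc
    have hall := (totalDegree_eq_zero_iff σ p).mp h d hds
    exact hd (Finsupp.ext fun x => hall x)

lemma one_le_totalDegree_of_nonunit {p : MvPolynomial σ K} (hp : p ≠ 0) (hu : ¬ IsUnit p) :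
    1 ≤ p.totalDegree := by
  by_contra h
  have h0 : p.totalDegree = 0 := by omega
  have hC := eq_C_of_totalDegree_eq_zero h0
  have : coeff 0 p ≠ 0 := by
    intro hz; rw [hz, map_zero] at hC; exact hp hC
  exact hu (hC ▸ ((isUnit_iff_ne_zero.mpr this).map (C : K →+* MvPolynomial σ K)))

end Deg

/-- canonical decuple form of a polynomial of degree ≤ 2 -/
def dec (k0 k1 k2 k3 A00 A01 A02 A11 A12 A22 : K) : MvPolynomial (Fin 3) K :=
  C k0 + C k1 * X 0 + C k2 * X 1 + C k3 * X 2
    + C A00 * X 0 ^ 2 + C A01 * X 0 * X 1 + C A02 * X 0 * X 2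
    + C A11 * X 1 ^ 2 + C A12 * X 1 * X 2 + C A22 * X 2 ^ 2

lemma c000 (k0 k1 k2 k3 A00 A01 A02 A11 A12 A22 : K) :
    coeff (0 : Fin 3 →₀ ℕ) (dec k0 k1 k2 k3 A00 A01 A02 A11 A12 A22 : MvPolynomial (Fin 3) K) = k0 := by
  simp [dec, X, monomial_mul, monomial_pow, C_mul_monomial, coeff_monomial, coeff_add,
    coeff_C, Finsupp.ext_iff, Fin.forall_fin_succ, Finsupp.single_apply]

lemma c100 (k0 k1 k2 k3 A00 A01 A02 A11 A12 A22 : K) :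
    coeff (Finsupp.single (0 : Fin 3) 1) (dec k0 k1 k2 k3 A00 A01 A02 A11 A12 A22 : MvPolynomial (Fin 3) K) = k1 := by
  simp [dec, X, monomial_mul, monomial_pow, C_mul_monomial, coeff_monomial, coeff_add,
    coeff_C, Finsupp.ext_iff, Fin.forall_fin_succ, Finsupp.single_apply]

lemma c010 (k0 k1 k2 k3 A00 A01 A02 A11 A12 A22 : K) :
    coeff (Finsupp.single (1 : Fin 3) 1) (dec k0 k1 k2 k3 A00 A01 A02 A11 A12 A22 : MvPolynomial (Fin 3) K) = k2 := by
  simp [dec, X, monomial_mul, monomial_pow, C_mul_monomial, coeff_monomial, coeff_add,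
    coeff_C, Finsupp.ext_iff, Fin.forall_fin_succ, Finsupp.single_apply]

lemma c001 (k0 k1 k2 k3 A00 A01 A02 A11 A12 A22 : K) :
    coeff (Finsupp.single (2 : Fin 3) 1) (dec k0 k1 k2 k3 A00 A01 A02 A11 A12 A22 : MvPolynomial (Fin 3) K) = k3 := by
  simp [dec, X, monomial_mul, monomial_pow, C_mul_monomial, coeff_monomial, coeff_add,
    coeff_C, Finsupp.ext_iff, Fin.forall_fin_succ, Finsupp.single_apply]

lemma c200 (k0 k1 k2 k3 A00 A01 A02 A11 A12 A22 : K) :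
    coeff (Finsupp.single (0 : Fin 3) 1 + Finsupp.single 0 1) (dec k0 k1 k2 k3 A00 A01 A02 A11 A12 A22 : MvPolynomial (Fin 3) K) = A00 := by
  simp [dec, X, monomial_mul, monomial_pow, C_mul_monomial, coeff_monomial, coeff_add,
    coeff_C, Finsupp.ext_iff, Fin.forall_fin_succ, Finsupp.single_apply]

lemma c110 (k0 k1 k2 k3 A00 A01 A02 A11 A12 A22 : K) :
    coeff (Finsupp.single (0 : Fin 3) 1 + Finsupp.single 1 1) (dec k0 k1 k2 k3 A00 A01 A02 A11 A12 A22 : MvPolynomial (Fin 3) K) = A01 := by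
  simp [dec, X, monomial_mul, monomial_pow, C_mul_monomial, coeff_monomial, coeff_add,
    coeff_C, Finsupp.ext_iff, Fin.forall_fin_succ, Finsupp.single_apply]

lemma c101 (k0 k1 k2 k3 A00 A01 A02 A11 A12 A22 : K) :
    coeff (Finsupp.single (0 : Fin 3) 1 + Finsupp.single 2 1) (dec k0 k1 k2 k3 A00 A01 A02 A11 A12 A22 : MvPolynomial (Fin 3) K) = A02 := by
  simp [dec, X, monomial_mul, monomial_pow, C_mul_monomial, coeff_monomial, coeff_add,
    coeff_C, Finsupp.ext_iff, Fin.forall_fin_succ, Finsupp.single_apply]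

lemma c020 (k0 k1 k2 k3 A00 A01 A02 A11 A12 A22 : K) :
    coeff (Finsupp.single (1 : Fin 3) 1 + Finsupp.single 1 1) (dec k0 k1 k2 k3 A00 A01 A02 A11 A12 A22 : MvPolynomial (Fin 3) K) = A11 := by
  simp [dec, X, monomial_mul, monomial_pow, C_mul_monomial, coeff_monomial, coeff_add,
    coeff_C, Finsupp.ext_iff, Fin.forall_fin_succ, Finsupp.single_apply]

lemma c011 (k0 k1 k2 k3 A00 A01 A02 A11 A12 A22 : K) :
    coeff (Finsupp.single (1 : Fin 3) 1 + Finsupp.single 2 1) (dec k0 k1 k2 k3 A00 A01 A02 A11 A12 A22 : MvPolynomial (Fin 3) K) = A12 := by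
  simp [dec, X, monomial_mul, monomial_pow, C_mul_monomial, coeff_monomial, coeff_add,
    coeff_C, Finsupp.ext_iff, Fin.forall_fin_succ, Finsupp.single_apply]

lemma c002 (k0 k1 k2 k3 A00 A01 A02 A11 A12 A22 : K) :
    coeff (Finsupp.single (2 : Fin 3) 1 + Finsupp.single 2 1) (dec k0 k1 k2 k3 A00 A01 A02 A11 A12 A22 : MvPolynomial (Fin 3) K) = A22 := by
  simp [dec, X, monomial_mul, monomial_pow, C_mul_monomial, coeff_monomial, coeff_add,
    coeff_C, Finsupp.ext_iff, Fin.forall_fin_succ, Finsupp.single_apply]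

lemma dec_inj {k0 k1 k2 k3 A00 A01 A02 A11 A12 A22 l0 l1 l2 l3 B00 B01 B02 B11 B12 B22 : K}
    (h : (dec k0 k1 k2 k3 A00 A01 A02 A11 A12 A22 : MvPolynomial (Fin 3) K)
      = dec l0 l1 l2 l3 B00 B01 B02 B11 B12 B22) :
    k0 = l0 ∧ k1 = l1 ∧ k2 = l2 ∧ k3 = l3 ∧ A00 = B00 ∧ A01 = B01 ∧ A02 = B02 ∧
      A11 = B11 ∧ A12 = B12 ∧ A22 = B22 := by
  have hc000 := congrArg (coeff (0 : Fin 3 →₀ ℕ)) h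
  simp only [c000] at hc000
  have hc100 := congrArg (coeff (Finsupp.single (0 : Fin 3) 1)) h
  simp only [c100] at hc100
  have hc010 := congrArg (coeff (Finsupp.single (1 : Fin 3) 1)) h
  simp only [c010] at hc010
  have hc001 := congrArg (coeff (Finsupp.single (2 : Fin 3) 1)) h
  simp only [c001] at hc001
  have hc200 := congrArg (coeff (Finsupp.single (0 : Fin 3) 1 + Finsupp.single 0 1)) h
  simp only [c200] at hc200
  have hc110 := congrArg (coeff (Finsupp.single (0 : Fin 3) 1 + Finsupp.single 1 1)) h
  simp only [c110] at hc110
  have hc101 := congrArg (coeff (Finsupp.single (0 : Fin 3) 1 + Finsupp.single 2 1)) h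
  simp only [c101] at hc101
  have hc020 := congrArg (coeff (Finsupp.single (1 : Fin 3) 1 + Finsupp.single 1 1)) h
  simp only [c020] at hc020
  have hc011 := congrArg (coeff (Finsupp.single (1 : Fin 3) 1 + Finsupp.single 2 1)) h
  simp only [c011] at hc011
  have hc002 := congrArg (coeff (Finsupp.single (2 : Fin 3) 1 + Finsupp.single 2 1)) h
  simp only [c002] at hc002
  exact ⟨hc000, hc100, hc010, hc001, hc200, hc110, hc101, hc020, hc011, hc002⟩

lemma mul_expand (p0 b c d q0 e g h : K) :
    ((C p0 + C b * X 0 + C c * X 1 + C d * X 2) *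
      (C q0 + C e * X 0 + C g * X 1 + C h * X 2) : MvPolynomial (Fin 3) K) =
    dec (p0*q0) (p0*e + q0*b) (p0*g + q0*c) (p0*h + q0*d) (b*e) (b*g + c*e) (b*h + d*e)
      (c*g) (c*h + d*g) (d*h) := by
  simp only [dec, map_add, map_mul]; ring

lemma linear_nonunit (b c d : K) :
    ¬ IsUnit (C b * X 0 + C c * X 1 + C d * X 2 : MvPolynomial (Fin 3) K) := by
  have hd1 : (C b * X 0 + C c * X 1 + C d * X 2 : MvPolynomial (Fin 3) K)
      = dec 0 b c d 0 0 0 0 0 0 := by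
    simp only [dec, map_zero]; ring
  rw [hd1]
  intro hu
  have hdeg := totalDegree_eq_zero_of_isUnit hu
  have hC := eq_C_of_totalDegree_eq_zero hdeg
  have hd2 : (C (coeff 0 (dec 0 b c d 0 0 0 0 0 0 : MvPolynomial (Fin 3) K))
      : MvPolynomial (Fin 3) K)
      = dec (coeff 0 (dec 0 b c d 0 0 0 0 0 0 : MvPolynomial (Fin 3) K)) 0 0 0 0 0 0 0 0 0 := by
    simp only [dec, map_zero]; ring
  rw [hd2] at hC
  obtain ⟨-, hb, hc', hd', -⟩ := dec_inj hC
  rw [hb, hc', hd'] at hu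
  exact hu.ne_zero (by simp [dec])


lemma not_irr_of_eqs {A00 A01 A02 A11 A12 A22 b c d e g h : K}
    (e1 : b*e = A00) (e2 : b*g+c*e = A01) (e3 : b*h+d*e = A02) (e4 : c*g = A11)
    (e5 : c*h+d*g = A12) (e6 : d*h = A22) :
    ¬ Irreducible (dec 0 0 0 0 A00 A01 A02 A11 A12 A22 : MvPolynomial (Fin 3) K) := by
  have hfac : (dec 0 0 0 0 A00 A01 A02 A11 A12 A22 : MvPolynomial (Fin 3) K) =
      (C b * X 0 + C c * X 1 + C d * X 2) * (C e * X 0 + C g * X 1 + C h * X 2) := by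
    rw [← e1, ← e2, ← e3, ← e4, ← e5, ← e6]
    simp only [dec, map_zero, map_mul, map_add]
    ring
  intro hirr
  rcases hirr.isUnit_or_isUnit hfac with hu | hu
  · exact linear_nonunit b c d hu
  · exact linear_nonunit e g h hu

/-- solvability of the six coefficient equations when `A12 ≠ 0`. -/
lemma solve12 [IsAlgClosed K] (h2 : (2:K) = 0) {A00 A01 A02 A11 A12 A22 : K}
    (hΔ : A00*A12^2 + A11*A02^2 + A22*A01^2 + A01*A02*A12 = 0) (h12 : A12 ≠ 0) :
    ∃ b c d e g h : K, b*e = A00 ∧ b*g+c*e = A01 ∧ b*h+d*e = A02 ∧ c*g = A11 ∧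
      c*h+d*g = A12 ∧ d*h = A22 := by
  -- first factor the binary part in X1, X2
  obtain ⟨c, d, g, h, e4, e5, e6⟩ : ∃ c d g h : K, c*g = A11 ∧ c*h+d*g = A12 ∧ d*h = A22 := by
    by_cases h11 : A11 = 0
    · exact ⟨0, 1, A12, A22, by simp [h11], by ring, by ring⟩
    · obtain ⟨t, ht⟩ := IsAlgClosed.exists_root
        (Polynomial.C A11 * Polynomial.X ^ 2 + Polynomial.C A12 * Polynomial.X +
          Polynomial.C A22) (by rw [Polynomial.degree_quadratic h11]; simp)
      have ht' : A11*t^2 + A12*t + A22 = 0 := by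
        simpa [Polynomial.IsRoot] using ht
      exact ⟨1, t, A11, A12 + A11*t, by ring, by linear_combination (A11*t)*h2,
        by linear_combination ht' - A22*h2⟩
  refine ⟨(A01*d + A02*c)/A12, c, d, (A01*h + A02*g)/A12, g, h, ?_, ?_, ?_, e4, e5, e6⟩
  · field_simp
    linear_combination A01^2*e6 + A02^2*e4 + A01*A02*e5 - hΔ +
      (A01^2*A22 + A02^2*A11 + A01*A02*A12)*h2
  · field_simp
    linear_combination A01*e5 + (A02*c*g)*h2
  · field_simp
    linear_combination A02*e5 + (A01*d*h)*h2


lemma not_irr_of_delta [IsAlgClosed K] (h2 : (2:K) = 0) {A00 A01 A02 A11 A12 A22 : K}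
    (hΔ : A00*A12^2 + A11*A02^2 + A22*A01^2 + A01*A02*A12 = 0) :
    ¬ Irreducible (dec 0 0 0 0 A00 A01 A02 A11 A12 A22 : MvPolynomial (Fin 3) K) := by
  by_cases h12 : A12 ≠ 0
  · obtain ⟨b, c, d, e, g, h, e1, e2, e3, e4, e5, e6⟩ := solve12 h2 hΔ h12
    exact not_irr_of_eqs e1 e2 e3 e4 e5 e6
  push_neg at h12
  by_cases h01 : A01 ≠ 0
  · -- swap the roles of X0 and X2
    obtain ⟨b, c, d, e, g, h, e1, e2, e3, e4, e5, e6⟩ := solve12 h2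
      (A00 := A22) (A01 := A12) (A02 := A02) (A11 := A11) (A12 := A01) (A22 := A00)
      (by linear_combination hΔ) h01
    exact not_irr_of_eqs (A00 := A00) (A01 := A01) (A02 := A02) (A11 := A11) (A12 := A12)
      (A22 := A22) (b := d) (c := c) (d := b) (e := h) (g := g) (h := e)
      (by linear_combination e6) (by linear_combination e5) (by linear_combination e3)
      (by linear_combination e4) (by linear_combination e2) (by linear_combination e1)
  push_neg at h01
  by_cases h02 : A02 ≠ 0
  · -- swap the roles of X0 and X1
    obtain ⟨b, c, d, e, g, h, e1, e2, e3, e4, e5, e6⟩ := solve12 h2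
      (A00 := A11) (A01 := A01) (A02 := A12) (A11 := A00) (A12 := A02) (A22 := A22)
      (by linear_combination hΔ) h02
    exact not_irr_of_eqs (A00 := A00) (A01 := A01) (A02 := A02) (A11 := A11) (A12 := A12)
      (A22 := A22) (b := c) (c := b) (d := d) (e := g) (g := e) (h := h)
      (by linear_combination e4) (by linear_combination e2) (by linear_combination e5)
      (by linear_combination e1) (by linear_combination e3) (by linear_combination e6)
  push_neg at h02
  -- all off-diagonal coefficients vanish: the form is a square
  obtain ⟨r0, hr0⟩ := IsAlgClosed.exists_pow_nat_eq A00 (n := 2) (by norm_num)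
  obtain ⟨r1, hr1⟩ := IsAlgClosed.exists_pow_nat_eq A11 (n := 2) (by norm_num)
  obtain ⟨r2, hr2⟩ := IsAlgClosed.exists_pow_nat_eq A22 (n := 2) (by norm_num)
  exact not_irr_of_eqs (b := r0) (c := r1) (d := r2) (e := r0) (g := r1) (h := r2)
    (by linear_combination hr0) (by linear_combination r0*r1*h2 - h01)
    (by linear_combination r0*r2*h2 - h02) (by linear_combination hr1)
    (by linear_combination r1*r2*h2 - h12) (by linear_combination hr2)

lemma delta_of_not_irr (h2 : (2:K) = 0) {A00 A01 A02 A11 A12 A22 : K}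
    (h : ¬ Irreducible (dec 0 0 0 0 A00 A01 A02 A11 A12 A22 : MvPolynomial (Fin 3) K)) :
    A00*A12^2 + A11*A02^2 + A22*A01^2 + A01*A02*A12 = 0 := by
  set f : MvPolynomial (Fin 3) K := dec 0 0 0 0 A00 A01 A02 A11 A12 A22 with hf
  -- a helper closing the goal once all quadratic coefficients vanish
  have hzero : f = 0 → A00*A12^2 + A11*A02^2 + A22*A01^2 + A01*A02*A12 = 0 := by
    intro h0
    have h0' : (dec 0 0 0 0 A00 A01 A02 A11 A12 A22 : MvPolynomial (Fin 3) K)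
        = dec 0 0 0 0 0 0 0 0 0 0 := by
      rw [← hf, h0]; simp [dec]
    obtain ⟨-, -, -, -, q1, q2, q3, q4, q5, q6⟩ := dec_inj h0'
    rw [q1, q2, q3, q4, q5, q6]; ring
  rw [irreducible_iff] at h
  push_neg at h
  by_cases hu : IsUnit f
  · -- a unit is a constant, so all quadratic coefficients vanish
    have hdeg := totalDegree_eq_zero_of_isUnit hu
    have hC := eq_C_of_totalDegree_eq_zero hdeg
    have hC' : (dec 0 0 0 0 A00 A01 A02 A11 A12 A22 : MvPolynomial (Fin 3) K)
        = dec (coeff 0 f) 0 0 0 0 0 0 0 0 0 := by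
      rw [← hf]
      conv_lhs => rw [hC]
      simp only [dec, map_zero]; ring
    obtain ⟨-, -, -, -, q1, q2, q3, q4, q5, q6⟩ := dec_inj hC'
    rw [q1, q2, q3, q4, q5, q6]; ring
  obtain ⟨p, q, hpq, hpu, hqu⟩ := h hu
  rcases eq_or_ne p 0 with rfl | hp0
  · exact hzero (by rw [hpq, zero_mul])
  rcases eq_or_ne q 0 with rfl | hq0
  · exact hzero (by rw [hpq, mul_zero])
  -- both factors have total degree exactly 1
  have hdp := one_le_totalDegree_of_nonunit hp0 hpu
  have hdq := one_le_totalDegree_of_nonunit hq0 hqu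
  have hfd : f.totalDegree ≤ 2 := by
    have hX : ∀ (a : K) (i j : Fin 3),
        ((C a * X i * X j : MvPolynomial (Fin 3) K)).totalDegree ≤ 2 := by
      intro a i j
      refine (totalDegree_mul _ _).trans ?_
      have h1 : ((C a * X i : MvPolynomial (Fin 3) K)).totalDegree ≤ 1 := by
        refine (totalDegree_mul _ _).trans ?_
        simp [totalDegree_C, totalDegree_X]
      have h2 : ((X j : MvPolynomial (Fin 3) K)).totalDegree ≤ 1 := by
        simp [totalDegree_X]
      omega
    have hsq : ∀ (a : K) (i : Fin 3),
        ((C a * X i ^ 2 : MvPolynomial (Fin 3) K)).totalDegree ≤ 2 := by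
      intro a i
      have : (C a * X i ^ 2 : MvPolynomial (Fin 3) K) = C a * X i * X i := by ring
      rw [this]; exact hX a i i
    have hstep : ∀ (u v : MvPolynomial (Fin 3) K), u.totalDegree ≤ 2 → v.totalDegree ≤ 2 →
        (u+v).totalDegree ≤ 2 := fun u v hu hv => (totalDegree_add u v).trans (max_le hu hv)
    rw [hf]
    simp only [dec, map_zero, zero_mul, zero_add, add_zero]
    exact hstep _ _ (hstep _ _ (hstep _ _ (hstep _ _ (hstep _ _ (hsq A00 0) (hX A01 0 1))
      (hX A02 0 2)) (hsq A11 1)) (hX A12 1 2)) (hsq A22 2)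
  have hsum := add_totalDegree_le_mul hp0 hq0
  rw [← hpq] at hsum
  have hp1 : p.totalDegree ≤ 1 := by omega
  have hq1 : q.totalDegree ≤ 1 := by omega
  have hPs := structural hp1
  have hQs := structural hq1
  rw [hPs, hQs, mul_expand] at hpq
  obtain ⟨-, -, -, -, q1, q2, q3, q4, q5, q6⟩ := dec_inj hpq
  rw [q1, q2, q3, q4, q5, q6]
  linear_combination (coeff (Finsupp.single 0 1) p * (coeff (Finsupp.single 1 1) p)^2 *
      coeff (Finsupp.single 0 1) q * (coeff (Finsupp.single 2 1) q)^2 +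
    coeff (Finsupp.single 0 1) p * (coeff (Finsupp.single 2 1) p)^2 *
      coeff (Finsupp.single 0 1) q * (coeff (Finsupp.single 1 1) q)^2 +
    (coeff (Finsupp.single 0 1) p)^2 * coeff (Finsupp.single 1 1) p *
      coeff (Finsupp.single 1 1) q * (coeff (Finsupp.single 2 1) q)^2 +
    coeff (Finsupp.single 1 1) p * (coeff (Finsupp.single 2 1) p)^2 *
      (coeff (Finsupp.single 0 1) q)^2 * coeff (Finsupp.single 1 1) q +
    (coeff (Finsupp.single 0 1) p)^2 * coeff (Finsupp.single 2 1) p *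
      (coeff (Finsupp.single 1 1) q)^2 * coeff (Finsupp.single 2 1) q +
    (coeff (Finsupp.single 1 1) p)^2 * coeff (Finsupp.single 2 1) p *
      (coeff (Finsupp.single 0 1) q)^2 * coeff (Finsupp.single 2 1) q +
    4 * coeff (Finsupp.single 0 1) p * coeff (Finsupp.single 1 1) p *
      coeff (Finsupp.single 2 1) p * coeff (Finsupp.single 0 1) q *
      coeff (Finsupp.single 1 1) q * coeff (Finsupp.single 2 1) q) * h2



end AuxLemmas

/-- a quadratic form over a finite field `F` of characteristic 2 is
absolutely irreducible (irreducible over an algebraic closure of `F`) iff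
`a00·a12² + a11·a02² + a22·a01² + a01·a02·a12 ≠ 0`. -/
theorem absolutely_irreducible_iff (F : Type*) [Field F] [Fintype F] [CharP F 2]
    (a00 a01 a02 a11 a12 a22 : F) :
    Irreducible (MvPolynomial.map (algebraMap F (AlgebraicClosure F))
        (C a00 * X 0 ^ 2 + C a01 * X 0 * X 1 + C a02 * X 0 * X 2 +
          C a11 * X 1 ^ 2 + C a12 * X 1 * X 2 + C a22 * X 2 ^ 2 : Poly F)) ↔
      a00 * a12 ^ 2 + a11 * a02 ^ 2 + a22 * a01 ^ 2 + a01 * a02 * a12 ≠ 0 := by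
  classical
  haveI : CharP (AlgebraicClosure F) 2 :=
    charP_of_injective_algebraMap (algebraMap F (AlgebraicClosure F)).injective 2
  have h2 : (2 : AlgebraicClosure F) = 0 := by
    have := CharP.cast_eq_zero (AlgebraicClosure F) 2
    exact_mod_cast this
  have hmap : (MvPolynomial.map (algebraMap F (AlgebraicClosure F))
      (C a00 * X 0 ^ 2 + C a01 * X 0 * X 1 + C a02 * X 0 * X 2 +
        C a11 * X 1 ^ 2 + C a12 * X 1 * X 2 + C a22 * X 2 ^ 2 : Poly F)) =
      dec 0 0 0 0 (algebraMap F (AlgebraicClosure F) a00)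
        (algebraMap F (AlgebraicClosure F) a01) (algebraMap F (AlgebraicClosure F) a02)
        (algebraMap F (AlgebraicClosure F) a11) (algebraMap F (AlgebraicClosure F) a12)
        (algebraMap F (AlgebraicClosure F) a22) := by
    simp only [map_add, map_mul, map_pow, MvPolynomial.map_C, MvPolynomial.map_X, dec, map_zero]
    ring
  rw [hmap]
  constructor
  · intro hirr hΔ0
    apply not_irr_of_delta h2 ?_ hirr
    have hz : algebraMap F (AlgebraicClosure F)
        (a00 * a12 ^ 2 + a11 * a02 ^ 2 + a22 * a01 ^ 2 + a01 * a02 * a12) = 0 := by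
      rw [hΔ0, map_zero]
    simpa [map_add, map_mul, map_pow] using hz
  · intro hΔ
    by_contra hnot
    have hK := delta_of_not_irr h2 hnot
    apply hΔ
    have hz : algebraMap F (AlgebraicClosure F)
        (a00 * a12 ^ 2 + a11 * a02 ^ 2 + a22 * a01 ^ 2 + a01 * a02 * a12) = 0 := by
      simpa [map_add, map_mul, map_pow] using hK
    exact (map_eq_zero_iff _ (algebraMap F (AlgebraicClosure F)).injective).mp hz

end Pencils
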